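/- Affine invariance: Let A be an invertible n₁ × n₁ matrix and B an invertible n₂ × n₂ matrix. Assume μ is translation and scale equivariant and σ is scale equivariant and translation invariant (μ(sY+c) = sμ(Y)+c, σ(sY+c) = |s|σ(Y)). Then the tensor outlyingness satisfies O(AXB, A𝒳B) = O(X, 𝒳) for every matrix X, and hence TPD(AXB, A𝒳B) = TPD(X, 𝒳). -/
import Mathlib

open Matrix

private lemma unit_scale_aux {n : ℕ} (w : Fin n → ℝ) (hw : w ≠ 0) :
    ∃ t : ℝ, t ≠ 0 ∧ (t • w) ⬝ᵥ (t • w) = 1 := by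
  have hpos : 0 < w ⬝ᵥ w := by
    rcases lt_or_eq_of_le (Finset.sum_nonneg fun i _ => mul_self_nonneg (w i)) with h | h
    · exact h
    · exact absurd (dotProduct_self_eq_zero.mp h.symm) hw
  refine ⟨(Real.sqrt (w ⬝ᵥ w))⁻¹, inv_ne_zero (ne_of_gt (Real.sqrt_pos.mpr hpos)), ?_⟩
  rw [smul_dotProduct, dotProduct_smul, smul_eq_mul, smul_eq_mul, ← mul_assoc,
    ← mul_inv, Real.mul_self_sqrt hpos.le]
  exact inv_mul_cancel₀ hpos.ne'

private lemma key_subset {n₁ n₂ : ℕ} {Ω : Type*}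
    (μ σ : (Ω → ℝ) → ℝ)
    (hμ : ∀ (c t : ℝ) (Y : Ω → ℝ), μ (fun ω => t * Y ω + c) = t * μ Y + c)
    (hσ : ∀ (c t : ℝ) (Y : Ω → ℝ), σ (fun ω => t * Y ω + c) = |t| * σ Y)
    (A : Matrix (Fin n₁) (Fin n₁) ℝ) (B : Matrix (Fin n₂) (Fin n₂) ℝ)
    (hA : IsUnit A) (hB : IsUnit B)
    (X : Matrix (Fin n₁) (Fin n₂) ℝ) (𝒳 : Ω → Matrix (Fin n₁) (Fin n₂) ℝ) :
    {r | ∃ (u : Fin n₁ → ℝ) (v : Fin n₂ → ℝ),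
      u ⬝ᵥ u = 1 ∧ v ⬝ᵥ v = 1 ∧
      r = |u ⬝ᵥ ((A * X * B) *ᵥ v) - μ (fun ω => u ⬝ᵥ ((A * 𝒳 ω * B) *ᵥ v))| /
            σ (fun ω => u ⬝ᵥ ((A * 𝒳 ω * B) *ᵥ v))} ⊆
    {r | ∃ (u : Fin n₁ → ℝ) (v : Fin n₂ → ℝ),
      u ⬝ᵥ u = 1 ∧ v ⬝ᵥ v = 1 ∧
      r = |u ⬝ᵥ (X *ᵥ v) - μ (fun ω => u ⬝ᵥ (𝒳 ω *ᵥ v))| /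
            σ (fun ω => u ⬝ᵥ (𝒳 ω *ᵥ v))} := by
  rintro r ⟨u, v, hu, hv, rfl⟩
  have hu0 : u ≠ 0 := by rintro rfl; simp at hu
  have hv0 : v ≠ 0 := by rintro rfl; simp at hv
  set w : Fin n₁ → ℝ := u ᵥ* A with hw
  set z : Fin n₂ → ℝ := B *ᵥ v with hz
  have hw0 : w ≠ 0 := by
    intro h
    apply hu0
    have : u ᵥ* A ᵥ* (A⁻¹) = 0 ᵥ* (A⁻¹) := by rw [← hw, h]
    rwa [vecMul_vecMul, Matrix.mul_nonsing_inv A ((isUnit_iff_isUnit_det A).mp hA),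
      vecMul_one, zero_vecMul] at this
  have hz0 : z ≠ 0 := by
    intro h
    apply hv0
    have : (B⁻¹) *ᵥ (B *ᵥ v) = (B⁻¹) *ᵥ 0 := by rw [← hz, h]
    rwa [mulVec_mulVec, Matrix.nonsing_inv_mul B ((isUnit_iff_isUnit_det B).mp hB),
      one_mulVec, mulVec_zero] at this
  obtain ⟨t, ht, htw⟩ := unit_scale_aux w hw0
  obtain ⟨s, hs, hsz⟩ := unit_scale_aux z hz0
  -- the computation of bilinear forms
  have hform : ∀ M : Matrix (Fin n₁) (Fin n₂) ℝ,
      (t • w) ⬝ᵥ (M *ᵥ (s • z)) = (t * s) * (u ⬝ᵥ ((A * M * B) *ᵥ v)) := by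
    intro M
    have hcore : w ⬝ᵥ (M *ᵥ z) = u ⬝ᵥ ((A * M * B) *ᵥ v) := by
      rw [hw, hz, ← mulVec_mulVec, ← dotProduct_mulVec, ← mulVec_mulVec]
    rw [mulVec_smul, dotProduct_smul, smul_dotProduct, smul_eq_mul, smul_eq_mul, hcore]
    ring
  refine ⟨t • w, s • z, htw, hsz, ?_⟩
  have hg : (fun ω => (t • w) ⬝ᵥ (𝒳 ω *ᵥ (s • z)))
      = fun ω => (t * s) * (fun ω => u ⬝ᵥ ((A * 𝒳 ω * B) *ᵥ v)) ω + 0 := by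
    funext ω; simpa using hform (𝒳 ω)
  rw [hform X, hg, hμ, hσ]
  set a := u ⬝ᵥ ((A * X * B) *ᵥ v)
  set m := μ fun ω => u ⬝ᵥ ((A * 𝒳 ω * B) *ᵥ v)
  set q := σ fun ω => u ⬝ᵥ ((A * 𝒳 ω * B) *ᵥ v)
  have hts : |t * s| ≠ 0 := abs_ne_zero.mpr (mul_ne_zero ht hs)
  rw [add_zero, ← mul_sub, abs_mul, mul_div_mul_left _ _ hts]

theorem tensorOutl_affine_invariant {n₁ n₂ : ℕ} {Ω : Type*}
    (μ σ : (Ω → ℝ) → ℝ)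
    (hμ : ∀ (c t : ℝ) (Y : Ω → ℝ), μ (fun ω => t * Y ω + c) = t * μ Y + c)
    (hσ : ∀ (c t : ℝ) (Y : Ω → ℝ), σ (fun ω => t * Y ω + c) = |t| * σ Y)
    (𝒳 : Ω → Matrix (Fin n₁) (Fin n₂) ℝ)
    (O : Matrix (Fin n₁) (Fin n₂) ℝ → (Ω → Matrix (Fin n₁) (Fin n₂) ℝ) → ℝ)
    (hO : ∀ X 𝒴, O X 𝒴 = sSup {r | ∃ (u : Fin n₁ → ℝ) (v : Fin n₂ → ℝ),
      u ⬝ᵥ u = 1 ∧ v ⬝ᵥ v = 1 ∧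
      r = |u ⬝ᵥ (X *ᵥ v) - μ (fun ω => u ⬝ᵥ (𝒴 ω *ᵥ v))| /
            σ (fun ω => u ⬝ᵥ (𝒴 ω *ᵥ v))})
    (A : Matrix (Fin n₁) (Fin n₁) ℝ) (B : Matrix (Fin n₂) (Fin n₂) ℝ)
    (hA : IsUnit A) (hB : IsUnit B)
    (X : Matrix (Fin n₁) (Fin n₂) ℝ) :
    O (A * X * B) (fun ω => A * 𝒳 ω * B) = O X 𝒳 ∧
    1 / (1 + O (A * X * B) (fun ω => A * 𝒳 ω * B)) = 1 / (1 + O X 𝒳) := by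
  have hAd := (isUnit_iff_isUnit_det A).mp hA
  have hBd := (isUnit_iff_isUnit_det B).mp hB
  have hA' : IsUnit (A⁻¹) := (isUnit_nonsing_inv_iff).mpr hA
  have hB' : IsUnit (B⁻¹) := (isUnit_nonsing_inv_iff).mpr hB
  have h1 : O (A * X * B) (fun ω => A * 𝒳 ω * B) = O X 𝒳 := by
    rw [hO, hO]
    congr 1
    apply Set.Subset.antisymm
    · exact key_subset μ σ hμ hσ A B hA hB X 𝒳
    · have h2 := key_subset μ σ hμ hσ (A⁻¹) (B⁻¹) hA' hB' (A * X * B)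
        (fun ω => A * 𝒳 ω * B)
      have e1 : A⁻¹ * (A * X * B) * B⁻¹ = X := by
        rw [Matrix.mul_assoc A X B, ← Matrix.mul_assoc A⁻¹ A (X * B),
          Matrix.nonsing_inv_mul A hAd, Matrix.one_mul, Matrix.mul_assoc X B B⁻¹,
          Matrix.mul_nonsing_inv B hBd, Matrix.mul_one]
      have e2 : ∀ ω, A⁻¹ * (A * 𝒳 ω * B) * B⁻¹ = 𝒳 ω := by
        intro ω
        rw [Matrix.mul_assoc A (𝒳 ω) B, ← Matrix.mul_assoc A⁻¹ A (𝒳 ω * B),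
          Matrix.nonsing_inv_mul A hAd, Matrix.one_mul, Matrix.mul_assoc (𝒳 ω) B B⁻¹,
          Matrix.mul_nonsing_inv B hBd, Matrix.mul_one]
      simp only [e1, e2] at h2
      exact h2
  exact ⟨h1, by rw [h1]⟩
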